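/- Let M be a complete DFA over a finite alphabet Σ with finite state set and let p be any state. Then there exists a prefix-free regular language P ⊆ Σ* such that the loop language Loop_M(p) equals the Kleene star P* of P. -/

import Mathlib

open Computability

section Aux

variable {α : Type*} {σ : Type*} (M : DFA α σ) (p : σ)

/-- The language of "first return" words: nonempty words that return to `p`
and no proper nonempty prefix returns to `p`. -/
def firstReturn : Language α :=
  {w | w ≠ [] ∧ M.evalFrom p w = p ∧
       ∀ v : List α, v <+: w → v ≠ [] → v ≠ w → M.evalFrom p v ≠ p}

open scoped Classical in
/-- DFA recognizing `firstReturn M p`. States: `inl () = start`,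
`inr (inl ()) = dead`, `inr (inr q)` tracks the state of `M`; `inr (inr p)`
is the accepting (just-returned) state. -/
noncomputable def loopDFA : DFA α (Unit ⊕ (Unit ⊕ σ)) where
  step s a :=
    match s with
    | Sum.inl _ => Sum.inr (Sum.inr (M.step p a))
    | Sum.inr (Sum.inl _) => Sum.inr (Sum.inl ())
    | Sum.inr (Sum.inr q) =>
        if q = p then Sum.inr (Sum.inl ()) else Sum.inr (Sum.inr (M.step q a))
  start := Sum.inl ()
  accept := {Sum.inr (Sum.inr p)}

lemma loopDFA_dead (w : List α) :
    (loopDFA M p).evalFrom (Sum.inr (Sum.inl ())) w = Sum.inr (Sum.inl ()) := by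
  induction w with
  | nil => rfl
  | cons a t ih =>
      have : (loopDFA M p).evalFrom (Sum.inr (Sum.inl ())) (a :: t)
          = (loopDFA M p).evalFrom ((loopDFA M p).step (Sum.inr (Sum.inl ())) a) t := rfl
      rw [this]
      simpa [loopDFA] using ih

lemma evalFrom_cons {τ : Type*} (N : DFA α τ) (s : τ) (a : α) (t : List α) :
    N.evalFrom s (a :: t) = N.evalFrom (N.step s a) t := rfl

lemma loopDFA_sim (w : List α) : ∀ q : σ,
    (∀ v : List α, v <+: w → v ≠ w → M.evalFrom q v ≠ p) →
    (loopDFA M p).evalFrom (Sum.inr (Sum.inr q)) w = Sum.inr (Sum.inr (M.evalFrom q w)) := by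
  induction w with
  | nil => intro q _; rfl
  | cons a t ih =>
      intro q hq
      have hqp : q ≠ p := by
        have := hq [] ⟨a :: t, rfl⟩ (by simp)
        simpa [DFA.evalFrom] using this
      rw [evalFrom_cons, evalFrom_cons]
      have hstep : (loopDFA M p).step (Sum.inr (Sum.inr q)) a
          = Sum.inr (Sum.inr (M.step q a)) := by
        simp [loopDFA, hqp]
      rw [hstep]
      refine ih (M.step q a) (fun v hv hne => ?_)
      obtain ⟨u, hu⟩ := hv
      have := hq (a :: v) ⟨u, by rw [List.cons_append, hu]⟩ (by simp [hne])
      simpa [evalFrom_cons] using this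

lemma loopDFA_sim_rev (w : List α) : ∀ q r : σ,
    (loopDFA M p).evalFrom (Sum.inr (Sum.inr q)) w = Sum.inr (Sum.inr r) →
    M.evalFrom q w = r ∧ ∀ v : List α, v <+: w → v ≠ w → M.evalFrom q v ≠ p := by
  induction w with
  | nil =>
      intro q r h
      have hqr : q = r := by simpa using h
      refine ⟨hqr, ?_⟩
      intro v hv hne
      exact absurd (List.prefix_nil.mp hv) hne
  | cons a t ih =>
      intro q r h
      by_cases hqp : q = p
      · exfalso
        rw [evalFrom_cons] at h
        have hstep : (loopDFA M p).step (Sum.inr (Sum.inr q)) a = Sum.inr (Sum.inl ()) := by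
          simp [loopDFA, hqp]
        rw [hstep, loopDFA_dead] at h
        simp at h
      · rw [evalFrom_cons] at h
        have hstep : (loopDFA M p).step (Sum.inr (Sum.inr q)) a
            = Sum.inr (Sum.inr (M.step q a)) := by
          simp [loopDFA, hqp]
        rw [hstep] at h
        obtain ⟨h1, h2⟩ := ih (M.step q a) r h
        refine ⟨by rw [evalFrom_cons]; exact h1, ?_⟩
        intro v hv hne
        match v with
        | [] => simpa [DFA.evalFrom] using hqp
        | b :: v' =>
            obtain ⟨u, hu⟩ := hv
            obtain ⟨hb, hu2⟩ := List.cons_eq_cons.mp hu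
            subst hb
            have hv' : v' <+: t := ⟨u, hu2⟩
            have hne' : v' ≠ t := fun hh => hne (by rw [hh])
            rw [evalFrom_cons]
            exact h2 v' hv' hne'

lemma loopDFA_accepts : (loopDFA M p).accepts = firstReturn M p := by
  ext w
  rw [DFA.mem_accepts]
  constructor
  · intro h
    match w with
    | [] =>
        exfalso
        have : (loopDFA M p).eval ([] : List α) = Sum.inl () := rfl
        rw [this] at h
        simp [loopDFA] at h
    | a :: t =>
        have heval : (loopDFA M p).eval (a :: t)
            = (loopDFA M p).evalFrom (Sum.inr (Sum.inr (M.step p a))) t := rfl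
        rw [heval] at h
        have h' : (loopDFA M p).evalFrom (Sum.inr (Sum.inr (M.step p a))) t
            = Sum.inr (Sum.inr p) := h
        obtain ⟨h1, h2⟩ := loopDFA_sim_rev M p t (M.step p a) p h'
        refine ⟨by simp, by rw [evalFrom_cons]; exact h1, ?_⟩
        intro v hv hvne hne
        match v with
        | [] => exact absurd rfl hvne
        | b :: v' =>
            obtain ⟨u, hu⟩ := hv
            obtain ⟨hb, hu2⟩ := List.cons_eq_cons.mp hu
            subst hb
            have hv' : v' <+: t := ⟨u, hu2⟩
            have hne' : v' ≠ t := fun hh => hne (by rw [hh])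
            rw [evalFrom_cons]
            exact h2 v' hv' hne'
  · rintro ⟨hne, hret, hmin⟩
    match w with
    | [] => exact absurd rfl hne
    | a :: t =>
        have heval : (loopDFA M p).eval (a :: t)
            = (loopDFA M p).evalFrom (Sum.inr (Sum.inr (M.step p a))) t := rfl
        rw [heval]
        have hsim := loopDFA_sim M p t (M.step p a) (fun v hv hvne => by
          obtain ⟨u, hu⟩ := hv
          have := hmin (a :: v) ⟨u, by rw [List.cons_append, hu]⟩ (by simp) (by simp [hvne])
          simpa [evalFrom_cons] using this)
        rw [hsim]
        rw [evalFrom_cons] at hret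
        rw [hret]
        rfl

lemma loop_subset_kstar : ∀ n : ℕ, ∀ w : List α, w.length ≤ n →
    M.evalFrom p w = p → w ∈ (firstReturn M p)∗ := by
  intro n
  induction n with
  | zero =>
      intro w hw _
      have : w = [] := List.length_eq_zero_iff.mp (Nat.le_zero.mp hw)
      rw [this]
      exact Language.nil_mem_kstar _
  | succ n ih =>
      intro w hw hret
      by_cases hnil : w = []
      · rw [hnil]; exact Language.nil_mem_kstar _
      · have hwpos : 0 < w.length := List.length_pos_iff.mpr hnil
        have hex : ∃ k, k ≠ 0 ∧ k ≤ w.length ∧ M.evalFrom p (w.take k) = p :=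
          ⟨w.length, by omega, le_refl _, by rw [List.take_length]; exact hret⟩
        classical
        obtain ⟨k, ⟨hk0, hkle, hkret⟩, hkmin⟩ :
            ∃ k, (k ≠ 0 ∧ k ≤ w.length ∧ M.evalFrom p (w.take k) = p) ∧
              ∀ j < k, ¬(j ≠ 0 ∧ j ≤ w.length ∧ M.evalFrom p (w.take j) = p) :=
          ⟨Nat.find hex, Nat.find_spec hex, fun j hj => Nat.find_min hex hj⟩
        set v := w.take k with hv
        set t := w.drop k with ht
        have hvt : v ++ t = w := List.take_append_drop k w
        have hvlen : v.length = k := by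
          rw [hv, List.length_take]; omega
        have hvP : v ∈ firstReturn M p := by
          refine ⟨by rw [← List.length_pos_iff]; omega, hkret, ?_⟩
          intro u hu hune hunev hcon
          have hulen : u.length < k := by
            have h1 : u.length ≤ v.length := List.IsPrefix.length_le hu
            rcases lt_or_eq_of_le h1 with h | h
            · omega
            · exact absurd (List.IsPrefix.eq_of_length hu h) hunev
          have huw : u = w.take u.length := by
            have huv : u = v.take u.length := List.prefix_iff_eq_take.mp hu
            rw [hv, List.take_take, min_eq_left (le_of_lt hulen)] at huv
            exact huv
          exact hkmin u.length hulen
            ⟨by simpa [List.length_eq_zero_iff] using hune, by omega, by rw [← huw]; exact hcon⟩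
        have htret : M.evalFrom p t = p := by
          have : M.evalFrom p (v ++ t) = p := by rw [hvt]; exact hret
          rw [DFA.evalFrom_of_append, hkret] at this
          exact this
        have htlen : t.length ≤ n := by
          have : t.length = w.length - k := by rw [ht, List.length_drop]
          omega
        have htstar := ih t htlen htret
        rw [Language.mem_kstar] at htstar ⊢
        obtain ⟨L, hL1, hL2⟩ := htstar
        refine ⟨v :: L, ?_, ?_⟩
        · simp [← hvt, hL1]
        · intro y hy
          rcases List.mem_cons.mp hy with rfl | hy
          · exact hvP
          · exact hL2 y hy

end Aux

/-- For any complete DFA `M` with finite state set and any state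
`p`, the loop language `{w | M.evalFrom p w = p}` equals `P∗` for some
prefix-free regular language `P`. -/
theorem stmt_1 {α : Type*} [Fintype α] {σ : Type*} [Fintype σ] (M : DFA α σ) (p : σ) :
    ∃ P : Language α,
      P.IsRegular ∧
      (∀ w ∈ P, ∀ v : List α, v <+: w → v ∈ P → v = w) ∧
      {w : List α | M.evalFrom p w = p} = P∗ := by
  classical
  refine ⟨firstReturn M p, ?_, ?_, ?_⟩
  · -- regular
    refine ⟨Fin (Fintype.card (Unit ⊕ (Unit ⊕ σ))), inferInstance,
      DFA.reindex (Fintype.equivFin (Unit ⊕ (Unit ⊕ σ))) (loopDFA M p), ?_⟩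
    rw [DFA.accepts_reindex]
    exact loopDFA_accepts M p
  · -- prefix-free
    rintro w ⟨hwne, hwret, hwmin⟩ v hv ⟨hvne, hvret, _⟩
    by_contra hne
    exact hwmin v hv hvne hne hvret
  · -- loop language equals kstar
    ext w
    constructor
    · intro hw
      exact loop_subset_kstar M p w.length w (le_refl _) hw
    · intro hw
      change w ∈ (firstReturn M p)∗ at hw
      rw [Language.mem_kstar] at hw
      obtain ⟨L, hL1, hL2⟩ := hw
      subst hL1
      show M.evalFrom p L.flatten = p
      induction L with
      | nil => rfl
      | cons y L ih =>
          have hy := hL2 y (by simp)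
          rw [List.flatten_cons, DFA.evalFrom_of_append, hy.2.1]
          exact ih (fun z hz => hL2 z (by simp [hz]))
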